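/- Characterization of realizable separator sequences: a sequence σ_0, …, σ_n of subsets of {S,E,C} is the separator sequence of some set of mentions if and only if it satisfies all of the following local conditions: σ_0 ⊆ {S}; σ_n ⊆ {E}; for every k with C ∈ σ_k: S ∈ σ_{k-1} or C ∈ σ_{k-1}, and E ∈ σ_{k+1} or C ∈ σ_{k+1}; for every k with E ∈ σ_k: S ∈ σ_{k-1} or C ∈ σ_{k-1}; for every k with S ∈ σ_k: E ∈ σ_{k+1} or C ∈ σ_{k+1}. -/
import Mathlib


inductive Marker | S | E | C
deriving DecidableEq

/-- Separator sequence of a set of mentions (intervals). Gap `k` lies between word `k` and word `k+1`. -/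
def sep (M : Set (ℕ × ℕ)) (k : ℕ) : Set Marker :=
  {m | (m = Marker.S ∧ ∃ p ∈ M, p.1 = k + 1) ∨
       (m = Marker.E ∧ ∃ p ∈ M, p.2 = k) ∨
       (m = Marker.C ∧ ∃ p ∈ M, p.1 ≤ k ∧ k + 1 ≤ p.2)}

/-- `M` is a set of mentions over a sentence of `n` words. -/
def Valid (n : ℕ) (M : Set (ℕ × ℕ)) : Prop :=
  ∀ p ∈ M, 1 ≤ p.1 ∧ p.1 ≤ p.2 ∧ p.2 ≤ n

lemma mem_sep_S (M : Set (ℕ × ℕ)) (k : ℕ) :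
    Marker.S ∈ sep M k ↔ ∃ p ∈ M, p.1 = k + 1 := by simp [sep]

lemma mem_sep_E (M : Set (ℕ × ℕ)) (k : ℕ) :
    Marker.E ∈ sep M k ↔ ∃ p ∈ M, p.2 = k := by simp [sep]

lemma mem_sep_C (M : Set (ℕ × ℕ)) (k : ℕ) :
    Marker.C ∈ sep M k ↔ ∃ p ∈ M, p.1 ≤ k ∧ k + 1 ≤ p.2 := by simp [sep]

theorem realizable_characterization (n : ℕ) (hn : 1 ≤ n) (σ : ℕ → Set Marker) :
    (∃ M : Set (ℕ × ℕ), Valid n M ∧ ∀ k ≤ n, σ k = sep M k) ↔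
    (σ 0 ⊆ {Marker.S} ∧ σ n ⊆ {Marker.E} ∧
      (∀ k ≤ n, Marker.C ∈ σ k →
        (Marker.S ∈ σ (k - 1) ∨ Marker.C ∈ σ (k - 1)) ∧
        (Marker.E ∈ σ (k + 1) ∨ Marker.C ∈ σ (k + 1))) ∧
      (∀ k ≤ n, Marker.E ∈ σ k → (Marker.S ∈ σ (k - 1) ∨ Marker.C ∈ σ (k - 1))) ∧
      (∀ k ≤ n, Marker.S ∈ σ k → (Marker.E ∈ σ (k + 1) ∨ Marker.C ∈ σ (k + 1)))) := by
  constructor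
  · rintro ⟨M, hV, hσ⟩
    refine ⟨?_, ?_, ?_, ?_, ?_⟩
    · -- σ 0 ⊆ {S}
      intro x hx
      rw [hσ 0 (by omega)] at hx
      rcases hx with ⟨hx, _⟩ | ⟨hx, p, hp, h2⟩ | ⟨hx, p, hp, h1, _⟩
      · simp [hx]
      · have := hV p hp; omega
      · have := hV p hp; omega
    · -- σ n ⊆ {E}
      intro x hx
      rw [hσ n le_rfl] at hx
      rcases hx with ⟨hx, p, hp, h1⟩ | ⟨hx, _⟩ | ⟨hx, p, hp, _, h2⟩
      · have := hV p hp; omega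
      · simp [hx]
      · have := hV p hp; omega
    · -- C condition
      intro k hk hx
      rw [hσ k hk, mem_sep_C] at hx
      obtain ⟨p, hp, h1, h2⟩ := hx
      have hv := hV p hp
      have hk1 : 1 ≤ k := by omega
      constructor
      · rw [hσ (k-1) (by omega)]
        rcases Nat.lt_or_ge p.1 k with h | h
        · right; rw [mem_sep_C]; exact ⟨p, hp, by omega, by omega⟩
        · left; rw [mem_sep_S]; exact ⟨p, hp, by omega⟩
      · rw [hσ (k+1) (by omega)]
        rcases Nat.lt_or_ge (k+1) p.2 with h | h
        · right; rw [mem_sep_C]; exact ⟨p, hp, by omega, by omega⟩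
        · left; rw [mem_sep_E]; exact ⟨p, hp, by omega⟩
    · -- E condition
      intro k hk hx
      rw [hσ k hk, mem_sep_E] at hx
      obtain ⟨p, hp, h2⟩ := hx
      have hv := hV p hp
      rw [hσ (k-1) (by omega)]
      rcases Nat.lt_or_ge p.1 k with h | h
      · right; rw [mem_sep_C]; exact ⟨p, hp, by omega, by omega⟩
      · left; rw [mem_sep_S]; exact ⟨p, hp, by omega⟩
    · -- S condition
      intro k hk hx
      rw [hσ k hk, mem_sep_S] at hx
      obtain ⟨p, hp, h1⟩ := hx
      have hv := hV p hp
      rw [hσ (k+1) (by omega)]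
      rcases Nat.lt_or_ge (k+1) p.2 with h | h
      · right; rw [mem_sep_C]; exact ⟨p, hp, by omega, by omega⟩
      · left; rw [mem_sep_E]; exact ⟨p, hp, by omega⟩
  · rintro ⟨h0, hend, hC', hE', hS'⟩
    have hC0 : Marker.C ∉ σ 0 := fun h => by have := h0 h; simp at this
    have hE0 : Marker.E ∉ σ 0 := fun h => by have := h0 h; simp at this
    have hCn : Marker.C ∉ σ n := fun h => by have := hend h; simp at this
    have hSn : Marker.S ∉ σ n := fun h => by have := hend h; simp at this
    -- extend leftwards along C's to an S
    have left : ∀ m ≤ n, Marker.C ∈ σ m →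
        ∃ i < m, Marker.S ∈ σ i ∧ ∀ t, i < t → t ≤ m → Marker.C ∈ σ t := by
      intro m
      induction m with
      | zero => intro _ h; exact absurd h hC0
      | succ m ih =>
        intro hm h
        obtain hl | hl := (hC' (m+1) hm h).1
        · refine ⟨m, by omega, by simpa using hl, fun t ht1 ht2 => ?_⟩
          have : t = m + 1 := by omega
          subst this; exact h
        · have hl' : Marker.C ∈ σ m := by simpa using hl
          obtain ⟨i, hi, hSi, hCt⟩ := ih (by omega) hl'
          refine ⟨i, by omega, hSi, fun t ht1 ht2 => ?_⟩
          rcases Nat.lt_or_ge t (m+1) with h' | h'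
          · exact hCt t ht1 (by omega)
          · have : t = m + 1 := by omega
            subst this; exact h
    -- extend rightwards along C's to an E
    have right : ∀ d m, n - m ≤ d → m ≤ n → Marker.C ∈ σ m →
        ∃ j, m < j ∧ j ≤ n ∧ Marker.E ∈ σ j ∧ ∀ t, m ≤ t → t < j → Marker.C ∈ σ t := by
      intro d
      induction d with
      | zero =>
        intro m hd hm h
        have : m = n := by omega
        subst this; exact absurd h hCn
      | succ d ih =>
        intro m hd hm h
        have hmn : m < n := lt_of_le_of_ne hm (fun e => hCn (e ▸ h))
        obtain hr | hr := (hC' m hm h).2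
        · refine ⟨m+1, by omega, by omega, hr, fun t ht1 ht2 => ?_⟩
          have : t = m := by omega
          subst this; exact h
        · obtain ⟨j, hj1, hj2, hjE, hjC⟩ := ih (m+1) (by omega) (by omega) hr
          refine ⟨j, by omega, hj2, hjE, fun t ht1 ht2 => ?_⟩
          rcases Nat.lt_or_ge t (m+1) with h' | h'
          · have : t = m := by omega
            subst this; exact h
          · exact hjC t h' ht2
    set M : Set (ℕ × ℕ) := {p | 1 ≤ p.1 ∧ p.1 ≤ p.2 ∧ p.2 ≤ n ∧
        Marker.S ∈ σ (p.1 - 1) ∧ Marker.E ∈ σ p.2 ∧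
        ∀ t, p.1 ≤ t → t < p.2 → Marker.C ∈ σ t} with hM
    refine ⟨M, fun p hp => ⟨hp.1, hp.2.1, hp.2.2.1⟩, fun k hk => ?_⟩
    ext x
    constructor
    · intro hx
      cases x with
      | S =>
        have hkn : k < n := lt_of_le_of_ne hk (fun e => hSn (e ▸ hx))
        rw [mem_sep_S]
        obtain hr | hr := hS' k hk hx
        · refine ⟨(k+1, k+1), ?_, rfl⟩
          refine ⟨by omega, le_rfl, by omega, by simpa using hx, hr, fun t ht1 ht2 => by omega⟩
        · obtain ⟨j, hj1, hj2, hjE, hjC⟩ := right (n - (k+1)) (k+1) le_rfl (by omega) hr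
          refine ⟨(k+1, j), ?_, rfl⟩
          refine ⟨by omega, by omega, hj2, by simpa using hx, hjE, fun t ht1 ht2 => hjC t ht1 ht2⟩
      | E =>
        have hk1 : 1 ≤ k := by
          rcases Nat.eq_zero_or_pos k with h | h
          · exact absurd (h ▸ hx) hE0
          · exact h
        rw [mem_sep_E]
        obtain hl | hl := hE' k hk hx
        · refine ⟨(k, k), ?_, rfl⟩
          exact ⟨hk1, le_rfl, hk, hl, hx, fun t ht1 ht2 => by omega⟩
        · obtain ⟨i, hi, hSi, hCt⟩ := left (k-1) (by omega) hl
          refine ⟨(i+1, k), ?_, rfl⟩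
          refine ⟨by omega, by omega, hk, by simpa using hSi, hx, fun t ht1 ht2 => hCt t (by omega) (by omega)⟩
      | C =>
        have hk1 : 1 ≤ k := by
          rcases Nat.eq_zero_or_pos k with h | h
          · exact absurd (h ▸ hx) hC0
          · exact h
        rw [mem_sep_C]
        obtain ⟨i, hi, hSi, hCtl⟩ := left k hk hx
        obtain ⟨j, hj1, hj2, hjE, hCtr⟩ := right (n - k) k le_rfl hk hx
        refine ⟨(i+1, j), ?_, by omega, by omega⟩
        refine ⟨by omega, by omega, hj2, by simpa using hSi, hjE, fun t ht1 ht2 => ?_⟩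
        rcases le_or_gt t k with h' | h'
        · exact hCtl t (by omega) h'
        · exact hCtr t (by omega) ht2
    · intro hx
      rcases hx with ⟨hx, p, hp, h1⟩ | ⟨hx, p, hp, h2⟩ | ⟨hx, p, hp, h1, h2⟩
      · subst hx
        have := hp.2.2.2.1
        rwa [h1, Nat.add_sub_cancel] at this
      · subst hx
        have := hp.2.2.2.2.1
        rwa [h2] at this
      · subst hx
        exact hp.2.2.2.2.2 k h1 (by omega)
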